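/- For every vertex-weighted graph $(G, w)$ with $w \geq 0$, the Lovász theta number is at most the fractional packing number: $\vartheta(G, w) \leq \alpha^*(G, w)$, where $\alpha^*(G, w) = \max\{\sum_i w_i x_i : x \geq 0,\ \sum_{i \in C} x_i \leq 1 \text{ for every clique } C \text{ of } G\}$. -/

import Mathlib

/-- Weighted Lovász theta is at most the fractional packing number: the value of any
feasible solution `X` of the weighted theta SDP is dominated by the value of some point
of the fractional stable set polytope (indeed the diagonal of `X` works). -/
theorem lovasz_theta_le_fractional_packing
    (n : ℕ) (G : SimpleGraph (Fin n)) (w : Fin n → ℝ) (hw : ∀ i, 0 ≤ w i)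
    (X : Matrix (Fin 1 ⊕ Fin n) (Fin 1 ⊕ Fin n) ℝ)
    (hX : X.PosSemidef)
    (h00 : X (Sum.inl 0) (Sum.inl 0) = 1)
    (hdiag : ∀ i, X (Sum.inr i) (Sum.inr i) = X (Sum.inl 0) (Sum.inr i))
    (hadj : ∀ i j, G.Adj i j → X (Sum.inr i) (Sum.inr j) = 0) :
    ∃ x : Fin n → ℝ, (∀ i, 0 ≤ x i) ∧
      (∀ C : Finset (Fin n), (∀ i ∈ C, ∀ j ∈ C, i ≠ j → G.Adj i j) →
        ∑ i ∈ C, x i ≤ 1) ∧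
      ∑ i, w i * X (Sum.inr i) (Sum.inr i) ≤ ∑ i, w i * x i := by
  refine ⟨fun i => X (Sum.inr i) (Sum.inr i), ?_, ?_, le_refl _⟩
  · intro i
    have := hX.dotProduct_mulVec_nonneg (Pi.single (Sum.inr i) 1)
    simpa [dotProduct, Matrix.mulVec, Pi.single_apply] using this
  · intro C hC
    -- test vector v = e₀ - indicator of C
    set v : (Fin 1 ⊕ Fin n) → ℝ :=
      Sum.elim (fun _ => 1) (fun i => if i ∈ C then -1 else 0) with hv
    have hpsd := hX.dotProduct_mulVec_nonneg v
    rw [star_trivial] at hpsd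
    have hsym : ∀ a b, X a b = X b a := fun a b => by
      have h := congrFun (congrFun hX.1 a) b
      simpa [Matrix.conjTranspose_apply] using h.symm
    have hquad : dotProduct v (X.mulVec v) = 1 - ∑ i ∈ C, X (Sum.inr i) (Sum.inr i) := by
      simp only [dotProduct, Matrix.mulVec, dotProduct,
        Fintype.sum_sum_type, Fin.sum_univ_one, hv, Sum.elim_inl, Sum.elim_inr]
      have hsum1 : ∀ a : Fin 1 ⊕ Fin n,
          ∑ j, X a (Sum.inr j) * (if j ∈ C then (-1:ℝ) else 0)
            = -∑ j ∈ C, X a (Sum.inr j) := by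
        intro a
        simp [mul_ite, Finset.sum_ite_mem]
      have h2 : ∀ x ∈ C, ∑ j ∈ C, X (Sum.inr x) (Sum.inr j)
          = X (Sum.inr x) (Sum.inr x) := by
        intro x hx
        refine Finset.sum_eq_single_of_mem x hx ?_
        intro j hj hne
        exact hadj x j (hC x hx j hj hne.symm)
      have h3 : ∀ x : Fin n, (if x ∈ C then (-1:ℝ) else 0) *
          (X (Sum.inr x) (Sum.inl 0) * 1
            + ∑ j, X (Sum.inr x) (Sum.inr j) * if j ∈ C then -1 else 0) = 0 := by
        intro x
        by_cases hx : x ∈ C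
        · rw [hsum1 (Sum.inr x), h2 x hx, if_pos hx,
            hsym (Sum.inr x) (Sum.inl 0), ← hdiag x]
          ring
        · simp [hx]
      rw [hsum1 (Sum.inl 0), h00,
        Finset.sum_congr rfl (fun x _ => h3 x), Finset.sum_const_zero, add_zero]
      have h4 : ∀ x ∈ C, X (Sum.inl 0) (Sum.inr x) = X (Sum.inr x) (Sum.inr x) :=
        fun x _ => (hdiag x).symm
      rw [Finset.sum_congr rfl h4]
      ring
    have : (0:ℝ) ≤ 1 - ∑ i ∈ C, X (Sum.inr i) (Sum.inr i) := hquad ▸ hpsd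
    linarith
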